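/- (Chain rule) Let 0 < α ≤ 1, β > 0 and t > 0. If g is α-differentiable at t in the sense of the local M-derivative, g is continuous at t, and f is differentiable (in the classical sense) at g(t), then the composition f ∘ g is α-differentiable at t and 𝒟_M^{α,β}(f ∘ g)(t) = f'(g(t)) · 𝒟_M^{α,β} g(t). -/

import Mathlib

open Filter Topology

/-- One-parameter Mittag-Leffler function `E_β(x) = ∑_{k=0}^∞ x^k / Γ(βk+1)`. -/
noncomputable def mittagLeffler (β x : ℝ) : ℝ :=
  ∑' k : ℕ, x ^ k / Real.Gamma (β * k + 1)

/-- `f` has local M-derivative `L` of order `α` with parameter `β` at `t`, i.e.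
`lim_{ε→0} (f (t · E_β (ε t^{-α})) - f t)/ε = L`. -/
def HasLocalMDerivAt (α β : ℝ) (f : ℝ → ℝ) (t L : ℝ) : Prop :=
  Tendsto (fun ε : ℝ => (f (t * mittagLeffler β (ε * t ^ (-α))) - f t) / ε)
    (𝓝[≠] (0 : ℝ)) (𝓝 L)

/-- Chain rule. -/
theorem stmt6 (α β t : ℝ) (hα0 : 0 < α) (hα1 : α ≤ 1) (hβ : 0 < β) (ht : 0 < t)
    (f g : ℝ → ℝ) (Lg f' : ℝ)
    (hg : HasLocalMDerivAt α β g t Lg) (hgc : ContinuousAt g t)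
    (hf : HasDerivAt f f' (g t)) :
    HasLocalMDerivAt α β (f ∘ g) t (f' * Lg) := by
  set u : ℝ → ℝ := fun ε => t * mittagLeffler β (ε * t ^ (-α)) with hu
  -- slope function
  set φ : ℝ → ℝ := fun y => if y = g t then f' else (f y - f (g t)) / (y - g t) with hφdef
  have key : ∀ y, f y - f (g t) = φ y * (y - g t) := by
    intro y
    by_cases hy : y = g t
    · simp [hφdef, hy]
    · simp only [hφdef, if_neg hy]
      rw [div_mul_cancel₀]
      exact sub_ne_zero.mpr hy
  have hφ : Tendsto φ (𝓝 (g t)) (𝓝 f') := by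
    rw [← nhdsNE_sup_pure]
    rw [tendsto_sup]
    constructor
    · have hslope : Tendsto (slope f (g t)) (𝓝[≠] (g t)) (𝓝 f') :=
        (hasDerivAt_iff_tendsto_slope).mp hf
      refine hslope.congr' ?_
      filter_upwards [self_mem_nhdsWithin] with y hy
      simp only [Set.mem_compl_iff, Set.mem_singleton_iff] at hy
      simp [slope, hφdef, if_neg hy, div_eq_inv_mul]
    · simp [hφdef, tendsto_pure_left]
      intro s hs
      exact mem_of_mem_nhds hs
  -- ε → 0
  have hε0 : Tendsto (fun ε : ℝ => ε) (𝓝[≠] (0:ℝ)) (𝓝 0) :=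
    tendsto_id.mono_left nhdsWithin_le_nhds
  -- g (u ε) - g t → 0
  have h2 : Tendsto (fun ε => g (u ε) - g t) (𝓝[≠] (0:ℝ)) (𝓝 0) := by
    have := hg.mul hε0
    rw [mul_zero] at this
    refine this.congr' ?_
    filter_upwards [self_mem_nhdsWithin] with ε hε
    have hε' : ε ≠ 0 := hε
    field_simp
    rfl
  have h3 : Tendsto (fun ε => g (u ε)) (𝓝[≠] (0:ℝ)) (𝓝 (g t)) := by
    have := h2.add_const (g t)
    simpa using this
  have h4 : Tendsto (fun ε => φ (g (u ε))) (𝓝[≠] (0:ℝ)) (𝓝 f') := hφ.comp h3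
  have h5 := h4.mul hg
  refine h5.congr ?_
  intro ε
  simp only [Function.comp]
  rw [key (g (u ε)), mul_div_assoc]
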